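/- Let G be a finitely generated group and U a pairwise disjoint G-equivariant family of subsets of G × X̄ for a compact space X̄ such that each member has the form G × U_X̄ with U_X̄ ⊆ X̄ open, and the family covers G × X̄. Then W = ∪_{g∈G} g·U_X̄ (the union of the orbit of one fixed U_X̄ under the induced action on X̄) is closed in X̄, hence compact, and consequently the orbit {g·U_X̄ | g ∈ G} is finite; therefore the stabiliser of U_X̄ has finite index in G. -/
import Mathlib


open Pointwise

/-- If `𝒰` is a pairwise disjoint, `G`-equivariant cover of `G × X̄` (`X̄` compact,
`G` acting by homeomorphisms) whose members all have the form `G × (open set)`, and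
`Set.univ ×ˢ UX ∈ 𝒰` with `UX` open, then `W = ⋃_g g • UX` is closed (hence compact),
the orbit `{g • UX}` is finite, and the stabiliser of `UX` has finite index in `G`. -/
theorem stmt8 {G X : Type*} [Group G] [TopologicalSpace X] [CompactSpace X]
    [MulAction G X] [ContinuousConstSMul G X]
    (𝒰 : Set (Set (G × X)))
    (hform : ∀ U ∈ 𝒰, ∃ V : Set X, IsOpen V ∧ U = Set.univ ×ˢ V)
    (hdisj : 𝒰.Pairwise (Disjoint · ·))
    (hequiv : ∀ (g : G), ∀ U ∈ 𝒰, g • U ∈ 𝒰)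
    (hcover : ⋃₀ 𝒰 = Set.univ)
    (UX : Set X) (hUXopen : IsOpen UX) (hmem : Set.univ ×ˢ UX ∈ 𝒰) :
    IsClosed (⋃ g : G, g • UX) ∧
    IsCompact (⋃ g : G, g • UX) ∧
    (Set.range fun g : G => g • UX).Finite ∧
    (MulAction.stabilizer G UX).index ≠ 0 := by
  classical
  -- `g • (univ ×ˢ UX) = univ ×ˢ (g • UX)`
  have hsmul_prod : ∀ g : G, g • (Set.univ ×ˢ UX : Set (G × X)) = Set.univ ×ˢ (g • UX) := by
    intro g
    ext ⟨a, x⟩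
    simp [Set.mem_smul_set_iff_inv_smul_mem, Prod.smul_def,
      Set.mem_prod]
  have hmem' : ∀ g : G, (Set.univ ×ˢ (g • UX) : Set (G × X)) ∈ 𝒰 := by
    intro g
    have := hequiv g _ hmem
    rwa [hsmul_prod g] at this
  -- two intersecting members of 𝒰 coincide
  have heq : ∀ A ∈ 𝒰, ∀ B ∈ 𝒰, (A ∩ B).Nonempty → A = B := by
    intro A hA B hB hne
    by_contra h
    exact (Set.not_disjoint_iff_nonempty_inter.mpr hne) (hdisj hA hB h)
  -- from `univ ×ˢ A = univ ×ˢ B` deduce `A = B`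
  have hprod_inj : ∀ A B : Set X,
      (Set.univ ×ˢ A : Set (G × X)) = Set.univ ×ˢ B → A = B := by
    intro A B hAB
    ext x
    constructor
    · intro hx
      have : ((1 : G), x) ∈ (Set.univ ×ˢ A : Set (G × X)) := ⟨trivial, hx⟩
      rw [hAB] at this
      exact this.2
    · intro hx
      have : ((1 : G), x) ∈ (Set.univ ×ˢ B : Set (G × X)) := ⟨trivial, hx⟩
      rw [← hAB] at this
      exact this.2
  have hWclosed : IsClosed (⋃ g : G, g • UX) := by
    rw [← isOpen_compl_iff, isOpen_iff_forall_mem_open]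
    intro x hx
    have hx1 : ((1 : G), x) ∈ ⋃₀ 𝒰 := by rw [hcover]; trivial
    obtain ⟨U, hU, hxU⟩ := hx1
    obtain ⟨V, hVopen, rfl⟩ := hform U hU
    refine ⟨V, ?_, hVopen, hxU.2⟩
    intro y hy hyW
    obtain ⟨_, ⟨g, rfl⟩, hyg⟩ := hyW
    have hVeq : (Set.univ ×ˢ V : Set (G × X)) = Set.univ ×ˢ (g • UX) :=
      heq _ hU _ (hmem' g) ⟨((1 : G), y), ⟨trivial, hy⟩, ⟨trivial, hyg⟩⟩
    have : V = g • UX := hprod_inj _ _ hVeq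
    exact hx (Set.mem_iUnion.mpr ⟨g, this ▸ hxU.2⟩)
  refine ⟨hWclosed, hWclosed.isCompact, ?_⟩
  have hfin : (Set.range fun g : G => g • UX).Finite := by
    rcases Set.eq_empty_or_nonempty UX with hUX | ⟨x0, hx0⟩
    · subst hUX
      have : (Set.range fun g : G => g • (∅ : Set X)) ⊆ {∅} := by
        rintro _ ⟨g, rfl⟩; simp
      exact (Set.finite_singleton _).subset this
    · have hcov : (⋃ g : G, g • UX) ⊆ ⋃ g : G, g • UX := subset_rfl
      obtain ⟨t, ht⟩ := hWclosed.isCompact.elim_finite_subcover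
        (fun g : G => g • UX) (fun g => hUXopen.smul g) hcov
      have hsub : (Set.range fun g : G => g • UX) ⊆ (fun g : G => g • UX) '' ↑t := by
        rintro _ ⟨g, rfl⟩
        have hgx : g • x0 ∈ ⋃ g : G, g • UX :=
          Set.mem_iUnion.mpr ⟨g, Set.smul_mem_smul_set hx0⟩
        obtain ⟨_, ⟨g', rfl⟩, _, ⟨hg't, rfl⟩, hgx'⟩ := ht hgx
        have hAB : (Set.univ ×ˢ (g • UX) : Set (G × X)) = Set.univ ×ˢ (g' • UX) :=
          heq _ (hmem' g) _ (hmem' g')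
            ⟨((1 : G), g • x0), ⟨trivial, Set.smul_mem_smul_set hx0⟩, ⟨trivial, hgx'⟩⟩
        exact ⟨g', hg't, (hprod_inj _ _ hAB).symm⟩
      exact ((t.finite_toSet).image _).subset hsub
  refine ⟨hfin, ?_⟩
  have horb : MulAction.orbit G UX = Set.range fun g : G => g • UX := rfl
  have : Finite (MulAction.orbit G UX) := by
    rw [horb]; exact hfin.to_subtype
  have : Finite (G ⧸ MulAction.stabilizer G UX) :=
    Finite.of_equiv _ (MulAction.orbitEquivQuotientStabilizer G UX)
  exact Subgroup.index_ne_zero_of_finite
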